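/- Let H be a real inner product space, let β > 0, and let f : H → ℝ be a convex, differentiable function whose gradient ∇f is β-Lipschitz. Then for every step size α with 0 ≤ α ≤ 2/β, the gradient-descent update map w ↦ w − α·∇f(w) is non-expansive: for all w, w' ∈ H, ‖(w − α·∇f(w)) − (w' − α·∇f(w'))‖ ≤ ‖w − w'‖. -/

import Mathlib

open RealInnerProductSpace

/-- First-order lower bound for a convex differentiable function. -/
lemma gd_aux_convex_lower {H : Type*} [NormedAddCommGroup H] [InnerProductSpace ℝ H]
    (f : H → ℝ) (g : H → H)
    (hconv : ConvexOn ℝ Set.univ f)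
    (hgrad : ∀ w, HasFDerivAt f (InnerProductSpace.toDualMap ℝ H (g w)) w)
    (x y : H) : f x + ⟪g x, y - x⟫ ≤ f y := by
  set h : ℝ → ℝ := fun t => f (x + t • (y - x)) with hh
  have hc : ∀ t : ℝ, HasDerivAt (fun t : ℝ => x + t • (y - x)) (y - x) t := by
    intro t
    simpa using ((hasDerivAt_id t).smul_const (y - x)).const_add x
  have hd : HasDerivAt h ⟪g x, y - x⟫ 0 := by
    have := (hgrad (x + (0:ℝ) • (y - x))).comp_hasDerivAt 0 (hc 0)
    simp at this; exact this
  have hslope : ∀ t ∈ Set.Ioo (0:ℝ) 1, (h t - h 0) / t ≤ f y - f x := by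
    intro t ht
    have hconv' := hconv.2 (Set.mem_univ x) (Set.mem_univ y)
      (by linarith [ht.1, ht.2] : (0:ℝ) ≤ 1 - t) (le_of_lt ht.1) (by ring)
    have hxy : (1 - t) • x + t • y = x + t • (y - x) := by
      simp [smul_sub, sub_smul]; abel
    rw [hxy] at hconv'
    have h0 : h 0 = f x := by simp [hh]
    rw [div_le_iff₀ ht.1, h0]
    simp only [hh]
    simp only [smul_eq_mul] at hconv'
    nlinarith [hconv']
  have htend : Filter.Tendsto (fun t => (h t - h 0) / t) (nhdsWithin 0 (Set.Ioi 0))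
      (nhds ⟪g x, y - x⟫) := by
    have := hd.tendsto_slope_zero_right
    simpa [slope_def_field, div_eq_inv_mul] using this
  have : ⟪g x, y - x⟫ ≤ f y - f x := by
    refine le_of_tendsto htend ?_
    filter_upwards [Ioo_mem_nhdsGT_of_mem (by norm_num : (0:ℝ) ∈ Set.Ico (0:ℝ) 1)] with t ht
    exact hslope t ht
  linarith

/-- Descent lemma for a function with `β`-Lipschitz gradient. -/
lemma gd_aux_descent {H : Type*} [NormedAddCommGroup H] [InnerProductSpace ℝ H]
    (β : ℝ) (hβ : 0 < β) (f : H → ℝ) (g : H → H)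
    (hgrad : ∀ w, HasFDerivAt f (InnerProductSpace.toDualMap ℝ H (g w)) w)
    (hlip : ∀ w w', ‖g w - g w'‖ ≤ β * ‖w - w'‖)
    (x y : H) : f y ≤ f x + ⟪g x, y - x⟫ + β / 2 * ‖y - x‖ ^ 2 := by
  set v := y - x with hv
  set h : ℝ → ℝ := fun t => f (x + t • v) with hh
  set h' : ℝ → ℝ := fun t => ⟪g (x + t • v), v⟫ with hh'
  have hc : ∀ t : ℝ, HasDerivAt (fun t : ℝ => x + t • v) v t := fun t => by
    simpa using ((hasDerivAt_id t).smul_const v).const_add x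
  have hd : ∀ t : ℝ, HasDerivAt h (h' t) t := fun t => by
    have := (hgrad (x + t • v)).comp_hasDerivAt t (hc t)
    simp at this; exact this
  have hgc : Continuous g := by
    have : LipschitzWith β.toNNReal g := by
      rw [lipschitzWith_iff_norm_sub_le]
      intro a b
      simpa [Real.coe_toNNReal β hβ.le] using hlip a b
    exact this.continuous
  have hcont : Continuous h' := by
    apply Continuous.inner
    · exact hgc.comp (by continuity)
    · exact continuous_const
  have hint : h 1 - h 0 = ∫ t in (0:ℝ)..1, h' t := by
    refine (intervalIntegral.integral_eq_sub_of_hasDerivAt (fun t _ => hd t) ?_).symm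
    exact hcont.intervalIntegrable 0 1
  have hbound : ∀ t ∈ Set.Icc (0:ℝ) 1, h' t ≤ h' 0 + β * t * ‖v‖ ^ 2 := by
    intro t ht
    have key : h' t - h' 0 = ⟪g (x + t • v) - g (x + (0:ℝ) • v), v⟫ := by
      simp [hh', inner_sub_left]
    have h1 : ⟪g (x + t • v) - g (x + (0:ℝ) • v), v⟫ ≤ ‖g (x + t • v) - g (x + (0:ℝ) • v)‖ * ‖v‖ :=
      real_inner_le_norm _ _
    have h2 : ‖g (x + t • v) - g (x + (0:ℝ) • v)‖ ≤ β * (t * ‖v‖) := by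
      have := hlip (x + t • v) (x + (0:ℝ) • v)
      simpa [norm_smul, abs_of_nonneg ht.1] using this
    nlinarith [key, norm_nonneg v, norm_nonneg (g (x + t • v) - g (x + (0:ℝ) • v))]
  have hmono : (∫ t in (0:ℝ)..1, h' t) ≤ ∫ t in (0:ℝ)..1, (h' 0 + β * t * ‖v‖ ^ 2) := by
    apply intervalIntegral.integral_mono_on (by norm_num) (hcont.intervalIntegrable 0 1)
    · exact (Continuous.intervalIntegrable (by continuity) 0 1)
    · exact hbound
  have hval : (∫ t in (0:ℝ)..1, (h' 0 + β * t * ‖v‖ ^ 2)) = h' 0 + β / 2 * ‖v‖ ^ 2 := by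
    rw [intervalIntegral.integral_add (intervalIntegrable_const)
      (Continuous.intervalIntegrable (by continuity) 0 1)]
    simp only [intervalIntegral.integral_const]
    rw [show (fun t : ℝ => β * t * ‖v‖ ^ 2) = fun t : ℝ => (β * ‖v‖ ^ 2) * t by ext t; ring]
    rw [intervalIntegral.integral_const_mul, integral_id]
    simp
    ring
  have h0 : h 0 = f x := by simp [hh]
  have h1 : h 1 = f y := by simp [hh, hv]
  have h'0 : h' 0 = ⟪g x, y - x⟫ := by simp [hh', hv]
  rw [← h1, ← h0, ← h'0]
  linarith [hmono.trans_eq hval, hint]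

/-- Cocoercivity (Baillon–Haddad). -/
lemma gd_aux_cocoercive {H : Type*} [NormedAddCommGroup H] [InnerProductSpace ℝ H]
    (β : ℝ) (hβ : 0 < β) (f : H → ℝ) (g : H → H)
    (hconv : ConvexOn ℝ Set.univ f)
    (hgrad : ∀ w, HasFDerivAt f (InnerProductSpace.toDualMap ℝ H (g w)) w)
    (hlip : ∀ w w', ‖g w - g w'‖ ≤ β * ‖w - w'‖)
    (x y : H) : (1 / β) * ‖g x - g y‖ ^ 2 ≤ ⟪g x - g y, x - y⟫ := by
  -- the shifted function φ_c z = f z - ⟪c, z⟫ for c = g x (resp. g y)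
  have main : ∀ x y : H,
      f x - ⟪g x, x⟫ ≤ f y - ⟪g x, y⟫ - (1 / (2 * β)) * ‖g y - g x‖ ^ 2 := by
    intro x y
    set c := g x with hc
    set φ : H → ℝ := fun z => f z - ⟪c, z⟫ with hφ
    set gφ : H → H := fun z => g z - c with hgφ
    have hφconv : ConvexOn ℝ Set.univ φ := by
      refine hconv.sub ⟨convex_univ, ?_⟩
      intro a _ b _ s t hs ht hst
      simp [inner_add_right, real_inner_smul_right]
    have hφgrad : ∀ w, HasFDerivAt φ (InnerProductSpace.toDualMap ℝ H (gφ w)) w := by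
      intro w
      have h2 : HasFDerivAt (fun z : H => (⟪c, z⟫ : ℝ))
          (InnerProductSpace.toDualMap ℝ H c) w :=
        (InnerProductSpace.toDualMap ℝ H c).hasFDerivAt
      have := (hgrad w).sub h2
      convert this using 1
      · rfl
      · rfl
      · rfl
      simp [hgφ, map_sub]
    have hφlip : ∀ w w', ‖gφ w - gφ w'‖ ≤ β * ‖w - w'‖ := by
      intro w w'
      simpa [hgφ, sub_sub_sub_cancel_right] using hlip w w'
    -- φ is minimized at x since gφ x = 0
    have hgφx : gφ x = 0 := by simp [hgφ, hc]
    have hmin : ∀ z, φ x ≤ φ z := by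
      intro z
      have := gd_aux_convex_lower φ gφ hφconv hφgrad x z
      simpa [hgφx] using this
    -- descent step from y
    set z := y - (1 / β) • gφ y with hz
    have hdesc := gd_aux_descent β hβ φ gφ hφgrad hφlip y z
    have hzy : z - y = -((1 / β) • gφ y) := by rw [hz]; abel
    have hinner : ⟪gφ y, z - y⟫ = -(1 / β) * ‖gφ y‖ ^ 2 := by
      rw [hzy]
      simp [real_inner_smul_right, real_inner_self_eq_norm_sq]
    have hnorm : ‖z - y‖ ^ 2 = (1 / β) ^ 2 * ‖gφ y‖ ^ 2 := by
      rw [hzy, norm_neg, norm_smul]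
      rw [Real.norm_eq_abs, abs_of_nonneg (by positivity : (0:ℝ) ≤ 1 / β)]
      ring
    have hβne : β ≠ 0 := ne_of_gt hβ
    have hstep : φ x ≤ φ y - (1 / (2 * β)) * ‖gφ y‖ ^ 2 := by
      have := (hmin z).trans hdesc
      rw [hinner, hnorm] at this
      have heq : φ y + -(1 / β) * ‖gφ y‖ ^ 2 + β / 2 * ((1 / β) ^ 2 * ‖gφ y‖ ^ 2)
          = φ y - (1 / (2 * β)) * ‖gφ y‖ ^ 2 := by
        field_simp
        ring_nf
      linarith [heq ▸ this]
    have : φ x = f x - ⟪g x, x⟫ := rfl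
    have hgyx : gφ y = g y - g x := rfl
    simpa [hφ, hgyx] using hstep
  have h1 := main x y
  have h2 := main y x
  have e1 : ‖g y - g x‖ = ‖g x - g y‖ := by rw [norm_sub_rev]
  rw [e1] at h1
  have hin : ⟪g x - g y, x - y⟫ = ⟪g x, x⟫ - ⟪g x, y⟫ - ⟪g y, x⟫ + ⟪g y, y⟫ := by
    simp [inner_sub_left, inner_sub_right]
    ring
  have hβne : β ≠ 0 := ne_of_gt hβ
  have hs : (1 / (2 * β)) * ‖g x - g y‖ ^ 2 + (1 / (2 * β)) * ‖g x - g y‖ ^ 2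
      = (1 / β) * ‖g x - g y‖ ^ 2 := by field_simp; ring
  linarith [h1, h2, hin.ge, hin.le, hs]

/-- **Non-expansiveness of the gradient-descent update.** Let `H` be a real inner product
space, `f : H → ℝ` convex and differentiable with gradient `g` (i.e. `g w` is the Riesz
representative of the Fréchet derivative of `f` at `w`, for every `w`), and assume the gradient
is `β`-Lipschitz. Then for every step size `0 ≤ α ≤ 2/β`, the update `w ↦ w − α • g w` is
non-expansive. -/
theorem gradient_descent_update_nonexpansive
    {H : Type*} [NormedAddCommGroup H] [InnerProductSpace ℝ H]
    (β : ℝ) (hβ : 0 < β) (f : H → ℝ) (g : H → H)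
    (hconv : ConvexOn ℝ Set.univ f)
    (hgrad : ∀ w, HasFDerivAt f (InnerProductSpace.toDualMap ℝ H (g w)) w)
    (hlip : ∀ w w', ‖g w - g w'‖ ≤ β * ‖w - w'‖)
    (α : ℝ) (hα0 : 0 ≤ α) (hα2 : α ≤ 2 / β) :
    ∀ w w' : H, ‖(w - α • g w) - (w' - α • g w')‖ ≤ ‖w - w'‖ := by
  intro w w'
  set u := w - w' with hu
  set v := g w - g w' with hv
  have hcoco := gd_aux_cocoercive β hβ f g hconv hgrad hlip w w'
  have hrw : (w - α • g w) - (w' - α • g w') = u - α • v := by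
    simp [hu, hv, smul_sub]; abel
  rw [hrw]
  have hsq : ‖u - α • v‖ ^ 2 ≤ ‖u‖ ^ 2 := by
    have hexp : ‖u - α • v‖ ^ 2 = ‖u‖ ^ 2 - 2 * (α * ⟪u, v⟫) + α ^ 2 * ‖v‖ ^ 2 := by
      rw [norm_sub_sq_real, real_inner_smul_right, norm_smul]
      rw [Real.norm_eq_abs, abs_of_nonneg hα0]
      ring
    rw [hexp]
    have hvu : ⟪u, v⟫ = ⟪v, u⟫ := real_inner_comm _ _
    have hco : (1 / β) * ‖v‖ ^ 2 ≤ ⟪v, u⟫ := by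
      simpa [hu, hv, real_inner_comm] using hcoco
    have k1 : α * α * ‖v‖ ^ 2 ≤ α * (2 / β) * ‖v‖ ^ 2 :=
      mul_le_mul_of_nonneg_right (mul_le_mul_of_nonneg_left hα2 hα0) (sq_nonneg _)
    have k2 : 2 * α * (1 / β * ‖v‖ ^ 2) ≤ 2 * α * ⟪v, u⟫ :=
      mul_le_mul_of_nonneg_left hco (by linarith)
    rw [hvu]
    have k3 : α * (2 / β) * ‖v‖ ^ 2 = 2 * α * (1 / β * ‖v‖ ^ 2) := by ring
    nlinarith [k1, k2, k3, sq_abs α]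
  have := Real.sqrt_le_sqrt hsq
  rwa [Real.sqrt_sq (norm_nonneg _), Real.sqrt_sq (norm_nonneg _)] at this
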